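/- Let n ≥ 1 and N ≥ 1 be integers and let λ be a real number such that λ + n/2 − 2N + k ≠ 0 for every integer k with 1 ≤ k ≤ N. Then −N! · (λ + n/2 − 2N + 1)_N · ∑_{j=0}^{N} (−1)^{N−j} C(n, N−j) · (n/2)_j (λ + n − 2N)_j / ((λ + n/2 − 2N + 1)_j · j!) = (−1)^{N−1} · (∏_{j=0}^{N−1} (n/2 − j)) · λ · ∏_{j=1}^{N−1} (λ − N − j). (This is Corollary 4.3: on the round sphere S^n the Q-curvature polynomial satisfies Q^{res}_{2N}(λ) = (−1)^{N−1} ∏_{j=0}^{N−1}(n/2 − j) · λ · ∏_{j=1}^{N−1}(λ − N − j), written out with the explicit sphere values T*_{2j}(μ)(1) = (n/2)_j (μ)_j / (2^{2j} j! (μ − n/2 + 1)_j) and v_{2k} = (−1)^k 2^{−2k} C(n,k).) -/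

import Mathlib

/-- Pochhammer symbol `(x)_k = x (x+1) ⋯ (x+k-1)`, with `(x)_0 = 1`. -/
noncomputable def poch (x : ℝ) : ℕ → ℝ
  | 0 => 1
  | k + 1 => poch x k * (x + k)

lemma poch_zero (x : ℝ) : poch x 0 = 1 := rfl
lemma poch_succ (x : ℝ) (k : ℕ) : poch x (k+1) = poch x k * (x + k) := rfl

lemma poch_one (x : ℝ) : poch x 1 = x := by simp [poch]

lemma poch_add (x : ℝ) (m k : ℕ) : poch x (m + k) = poch x m * poch (x + m) k := by
  induction k with
  | zero => simp [poch]
  | succ k ih =>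
      have h : m + (k+1) = (m+k) + 1 := rfl
      rw [h, poch_succ, ih, poch_succ]
      push_cast
      ring

lemma poch_succ' (x : ℝ) (m : ℕ) : poch x (m+1) = x * poch (x+1) m := by
  have h : m + 1 = 1 + m := by omega
  rw [h, poch_add, poch_one]
  norm_num

lemma poch_eq_prod (x : ℝ) (m : ℕ) : poch x m = ∏ t ∈ Finset.range m, (x + t) := by
  induction m with
  | zero => simp [poch]
  | succ m ih => rw [poch_succ, ih, Finset.prod_range_succ]

lemma factR_ne (k : ℕ) : ((k.factorial : ℝ)) ≠ 0 :=
  Nat.cast_ne_zero.mpr k.factorial_ne_zero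

lemma vander : ∀ (m : ℕ), ∀ (α β : ℝ),
    ∑ k ∈ Finset.range (m+1), (m.choose k : ℝ) * poch α k * poch β (m - k)
      = poch (α+β) m := by
  intro m
  induction m with
  | zero => intro α β; simp [poch]
  | succ m ih =>
    intro α β
    rw [Finset.sum_range_succ']
    have key : ∀ k ∈ Finset.range (m+1),
        ((m+1).choose (k+1) : ℝ) * poch α (k+1) * poch β (m+1-(k+1)) =
        ((m.choose k : ℝ) * poch α k * poch β (m-k)) * (α + k)
        + (m.choose (k+1) : ℝ) * poch α (k+1) * poch β (m+1-(k+1)) := by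
      intro k hk
      have hk' : k ≤ m := Nat.lt_succ_iff.mp (Finset.mem_range.mp hk)
      have e5 : (((m+1).choose (k+1) : ℕ) : ℝ) = (m.choose k : ℝ) + (m.choose (k+1) : ℝ) := by
        exact_mod_cast congrArg (Nat.cast (R := ℝ)) (Nat.choose_succ_succ m k)
      have h1 : m + 1 - (k+1) = m - k := by omega
      rw [e5, h1, poch_succ]
      ring
    rw [Finset.sum_congr rfl key, Finset.sum_add_distrib]
    have h5 : (∑ k ∈ Finset.range (m+1), (m.choose (k+1) : ℝ) * poch α (k+1) * poch β (m+1-(k+1)))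
        + ((m+1).choose 0 : ℝ) * poch α 0 * poch β (m+1-0)
        = ∑ k ∈ Finset.range (m+1), (m.choose k : ℝ) * poch α k * poch β (m+1-k) := by
      rw [show (((m+1).choose 0 : ℕ):ℝ) = ((m.choose 0 : ℕ):ℝ) from by norm_num]
      rw [← Finset.sum_range_succ' (fun k => (m.choose k : ℝ) * poch α k * poch β (m+1-k)) (m+1)]
      rw [Finset.sum_range_succ]
      simp [Nat.choose_succ_self]
    rw [add_assoc, h5]
    have h6 : ∀ k ∈ Finset.range (m+1),
        (m.choose k : ℝ) * poch α k * poch β (m+1-k)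
        = ((m.choose k : ℝ) * poch α k * poch β (m-k)) * (β + ((m-k : ℕ) : ℝ)) := by
      intro k hk
      have hk' : k ≤ m := Nat.lt_succ_iff.mp (Finset.mem_range.mp hk)
      have h3 : m + 1 - k = (m - k) + 1 := by omega
      rw [h3, poch_succ]
      ring
    rw [Finset.sum_congr rfl h6, ← Finset.sum_add_distrib]
    have h7 : ∀ k ∈ Finset.range (m+1),
        ((m.choose k : ℝ) * poch α k * poch β (m-k)) * (α + k)
        + ((m.choose k : ℝ) * poch α k * poch β (m-k)) * (β + ((m-k : ℕ) : ℝ))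
        = ((m.choose k : ℝ) * poch α k * poch β (m-k)) * (α + β + m) := by
      intro k hk
      have hk' : k ≤ m := Nat.lt_succ_iff.mp (Finset.mem_range.mp hk)
      have hc : ((m - k : ℕ) : ℝ) = (m : ℝ) - k := by
        have := Nat.cast_sub (R := ℝ) hk'
        rw [this]
      rw [hc]
      ring
    rw [Finset.sum_congr rfl h7, ← Finset.sum_mul, ih, poch_succ]

lemma vander' : ∀ (m : ℕ), ∀ (α β : ℝ),
    ∑ k ∈ Finset.range (m+1), (-1:ℝ)^k * (m.choose k : ℝ) * poch α k * poch (β + k) (m - k)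
      = poch (β - α) m := by
  intro m
  induction m with
  | zero => intro α β; simp [poch]
  | succ m ih =>
    intro α β
    rw [Finset.sum_range_succ']
    have key : ∀ k ∈ Finset.range (m+1),
        (-1:ℝ)^(k+1) * ((m+1).choose (k+1) : ℝ) * poch α (k+1) * poch (β + ((k:ℕ)+1:ℕ)) (m+1-(k+1)) =
        -((-1:ℝ)^k * (m.choose k : ℝ) * poch α k * poch (β + k) (m+1-k))
        + (β - α) * ((-1:ℝ)^k * (m.choose k : ℝ) * poch α k * poch ((β+1) + k) (m - k))
        + (-1:ℝ)^(k+1) * (m.choose (k+1) : ℝ) * poch α (k+1) * poch (β + ((k:ℕ)+1:ℕ)) (m+1-(k+1)) := by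
      intro k hk
      have hk' : k ≤ m := Nat.lt_succ_iff.mp (Finset.mem_range.mp hk)
      have e5 : (((m+1).choose (k+1) : ℕ) : ℝ) = (m.choose k : ℝ) + (m.choose (k+1) : ℝ) := by
        exact_mod_cast congrArg (Nat.cast (R := ℝ)) (Nat.choose_succ_succ m k)
      have h1 : m + 1 - (k+1) = m - k := by omega
      have e3 : poch (β + ((k:ℕ)+1:ℕ)) (m-k) = poch ((β+1) + k) (m-k) := by
        congr 1
        push_cast
        ring
      have e2 : poch (β + k) (m+1-k) = (β + k) * poch ((β+1) + k) (m-k) := by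
        have h3 : m + 1 - k = (m - k) + 1 := by omega
        rw [h3, poch_succ']
        congr 2
        ring
      rw [e5, h1, e3, e2, poch_succ]
      ring
    rw [Finset.sum_congr rfl key, Finset.sum_add_distrib, Finset.sum_add_distrib]
    have h5 : (∑ k ∈ Finset.range (m+1),
          (-1:ℝ)^(k+1) * (m.choose (k+1) : ℝ) * poch α (k+1) * poch (β + ((k:ℕ)+1:ℕ)) (m+1-(k+1)))
        + (-1:ℝ)^0 * ((m+1).choose 0 : ℝ) * poch α 0 * poch (β + ((0:ℕ):ℕ)) (m+1-0)
        = ∑ k ∈ Finset.range (m+1), (-1:ℝ)^k * (m.choose k : ℝ) * poch α k * poch (β + k) (m+1-k) := by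
      rw [show (((m+1).choose 0 : ℕ):ℝ) = ((m.choose 0 : ℕ):ℝ) from by norm_num]
      rw [← Finset.sum_range_succ' (fun k => (-1:ℝ)^k * (m.choose k : ℝ) * poch α k * poch (β + k) (m+1-k)) (m+1)]
      rw [Finset.sum_range_succ]
      simp [Nat.choose_succ_self]
    rw [add_assoc, h5]
    have h6 : ∑ k ∈ Finset.range (m+1), (β - α) * ((-1:ℝ)^k * (m.choose k : ℝ) * poch α k * poch ((β+1) + k) (m - k))
        = (β - α) * poch ((β+1) - α) m := by
      rw [← Finset.mul_sum, ih α (β+1)]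
    rw [h6]
    have h7 : ∑ k ∈ Finset.range (m+1), -((-1:ℝ)^k * (m.choose k : ℝ) * poch α k * poch (β + k) (m+1-k))
        = -∑ k ∈ Finset.range (m+1), (-1:ℝ)^k * (m.choose k : ℝ) * poch α k * poch (β + k) (m+1-k) := by
      rw [Finset.sum_neg_distrib]
    rw [h7]
    have h8 : poch (β - α) (m+1) = (β - α) * poch ((β - α) + 1) m := poch_succ' _ _
    have h9 : (β+1) - α = (β - α) + 1 := by ring
    rw [h9] at h6 ⊢
    rw [h8]
    ring

lemma vander_div (m : ℕ) (α β : ℝ) :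
    ∑ k ∈ Finset.range (m+1), poch α k * poch β (m - k) / (k.factorial * (m-k).factorial)
      = poch (α+β) m / m.factorial := by
  rw [← vander m α β, Finset.sum_div]
  apply Finset.sum_congr rfl
  intro k hk
  have hk' : k ≤ m := Nat.lt_succ_iff.mp (Finset.mem_range.mp hk)
  have h := Nat.choose_mul_factorial_mul_factorial hk'
  have hc : (m.choose k : ℝ) * k.factorial * (m-k).factorial = m.factorial := by
    exact_mod_cast congrArg (Nat.cast (R := ℝ)) h
  rw [div_eq_div_iff (by positivity) (by positivity)]
  linear_combination - poch α k * poch β (m - k) * hc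

lemma vander'_div (m : ℕ) (α β : ℝ) :
    ∑ k ∈ Finset.range (m+1), (-1:ℝ)^k * poch α k * poch (β + k) (m - k) / (k.factorial * (m-k).factorial)
      = poch (β - α) m / m.factorial := by
  rw [← vander' m α β, Finset.sum_div]
  apply Finset.sum_congr rfl
  intro k hk
  have hk' : k ≤ m := Nat.lt_succ_iff.mp (Finset.mem_range.mp hk)
  have h := Nat.choose_mul_factorial_mul_factorial hk'
  have hc : (m.choose k : ℝ) * k.factorial * (m-k).factorial = m.factorial := by
    exact_mod_cast congrArg (Nat.cast (R := ℝ)) h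
  rw [div_eq_div_iff (by positivity) (by positivity)]
  linear_combination - ((-1:ℝ)^k * poch α k * poch (β + k) (m - k)) * hc

noncomputable def UA (K : ℕ) (w p q c : ℝ) (i j : ℕ) : ℝ :=
  poch p j * ((-1:ℝ)^i * (j.choose i : ℝ) * poch (c-q) i * poch (c + i) (j-i)) * poch w (K-j) /
    (poch c j * j.factorial * (K-j).factorial)

lemma stepA (K : ℕ) (w p q c : ℝ) (hc : ∀ i, i ≤ K → poch c i ≠ 0) :
    ∑ j ∈ Finset.range (K+1),
        poch p j * poch q j * poch w (K-j) / (poch c j * j.factorial * (K-j).factorial)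
    = ∑ i ∈ Finset.range (K+1),
        (-1:ℝ)^i * poch p i * poch (c - q) i * poch (w + p + i) (K-i) /
          (poch c i * i.factorial * (K-i).factorial) := by
  have expand : ∀ j ∈ Finset.range (K+1),
      poch p j * poch q j * poch w (K-j) / (poch c j * j.factorial * (K-j).factorial)
      = ∑ i ∈ Finset.range (j+1), UA K w p q c i j := by
    intro j hj
    have hq : poch q j = ∑ i ∈ Finset.range (j+1),
        (-1:ℝ)^i * (j.choose i : ℝ) * poch (c-q) i * poch (c + i) (j-i) := by
      have h := vander' j (c-q) c
      rw [show c - (c-q) = q from by ring] at h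
      exact h.symm
    rw [hq, Finset.mul_sum, Finset.sum_mul, Finset.sum_div]
    rfl
  rw [Finset.sum_congr rfl expand]
  have swap : ∑ j ∈ Finset.range (K+1), ∑ i ∈ Finset.range (j+1), UA K w p q c i j
      = ∑ i ∈ Finset.range (K+1), ∑ j ∈ Finset.Ico i (K+1), UA K w p q c i j := by
    have h := Finset.sum_Ico_Ico_comm 0 (K+1) (fun i j => UA K w p q c i j)
    simpa [Nat.Ico_zero_eq_range] using h.symm
  rw [swap]
  apply Finset.sum_congr rfl
  intro i hi
  have hiK : i ≤ K := Nat.lt_succ_iff.mp (Finset.mem_range.mp hi)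
  rw [Finset.sum_Ico_eq_sum_range]
  rw [show K + 1 - i = (K - i) + 1 from by omega]
  have hterm : ∀ k ∈ Finset.range ((K-i)+1),
      UA K w p q c i (i+k)
      = ((-1:ℝ)^i * poch p i * poch (c-q) i / (poch c i * i.factorial)) *
          (poch (p + i) k * poch w ((K-i) - k) / (k.factorial * ((K-i) - k).factorial)) := by
    intro k hk
    have hkK : k ≤ K - i := Nat.lt_succ_iff.mp (Finset.mem_range.mp hk)
    have hik : i + k ≤ K := by omega
    have hci : poch c i ≠ 0 := hc i hiK
    have hcik : poch c (i+k) ≠ 0 := hc (i+k) hik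
    have hsplit : poch c (i+k) = poch c i * poch (c + i) k := poch_add c i k
    have hcpl : poch (c + i) k ≠ 0 := by
      intro h0
      exact hcik (by rw [hsplit, h0, mul_zero])
    have hchoose : ((i+k).choose i : ℝ) * i.factorial * k.factorial = (i+k).factorial := by
      have h := Nat.choose_mul_factorial_mul_factorial (Nat.le_add_right i k)
      rw [show i + k - i = k from by omega] at h
      exact_mod_cast congrArg (Nat.cast (R := ℝ)) h
    unfold UA
    rw [show i + k - i = k from by omega, show K - (i+k) = (K-i) - k from by omega]
    rw [poch_add p i k, hsplit]
    field_simp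
    linear_combination (poch p i * poch (p + i) k * poch (c-q) i * poch w ((K-i)-k)) * hchoose
  rw [Finset.sum_congr rfl hterm, ← Finset.mul_sum, vander_div]
  rw [show p + (i:ℝ) + w = w + p + i from by ring]
  have hci : poch c i ≠ 0 := hc i hiK
  field_simp

noncomputable def UB (K : ℕ) (v p γ c : ℝ) (l i : ℕ) : ℝ :=
  (-1:ℝ)^i * ((-1:ℝ)^l * (i.choose l : ℝ) * poch (c-p) l * poch (c + l) (i-l)) * poch γ i *
      poch (v + i) (K-i) / (poch c i * i.factorial * (K-i).factorial)

lemma stepB (K : ℕ) (v p γ c : ℝ) (hc : ∀ i, i ≤ K → poch c i ≠ 0) :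
    ∑ i ∈ Finset.range (K+1),
        (-1:ℝ)^i * poch p i * poch γ i * poch (v + i) (K-i) /
          (poch c i * i.factorial * (K-i).factorial)
    = ∑ l ∈ Finset.range (K+1),
        poch (c-p) l * poch γ l * poch (v - γ) (K-l) /
          (poch c l * l.factorial * (K-l).factorial) := by
  have expand : ∀ i ∈ Finset.range (K+1),
      (-1:ℝ)^i * poch p i * poch γ i * poch (v + i) (K-i) /
          (poch c i * i.factorial * (K-i).factorial)
      = ∑ l ∈ Finset.range (i+1), UB K v p γ c l i := by
    intro i hi
    have hp : poch p i = ∑ l ∈ Finset.range (i+1),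
        (-1:ℝ)^l * (i.choose l : ℝ) * poch (c-p) l * poch (c + l) (i-l) := by
      have h := vander' i (c-p) c
      rw [show c - (c-p) = p from by ring] at h
      exact h.symm
    rw [hp, Finset.mul_sum, Finset.sum_mul, Finset.sum_mul, Finset.sum_div]
    rfl
  rw [Finset.sum_congr rfl expand]
  have swap : ∑ i ∈ Finset.range (K+1), ∑ l ∈ Finset.range (i+1), UB K v p γ c l i
      = ∑ l ∈ Finset.range (K+1), ∑ i ∈ Finset.Ico l (K+1), UB K v p γ c l i := by
    have h := Finset.sum_Ico_Ico_comm 0 (K+1) (fun l i => UB K v p γ c l i)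
    simpa [Nat.Ico_zero_eq_range] using h.symm
  rw [swap]
  apply Finset.sum_congr rfl
  intro l hl
  have hlK : l ≤ K := Nat.lt_succ_iff.mp (Finset.mem_range.mp hl)
  rw [Finset.sum_Ico_eq_sum_range]
  rw [show K + 1 - l = (K - l) + 1 from by omega]
  have hterm : ∀ k ∈ Finset.range ((K-l)+1),
      UB K v p γ c l (l+k)
      = (poch (c-p) l * poch γ l / (poch c l * l.factorial)) *
          ((-1:ℝ)^k * poch (γ + l) k * poch ((v + l) + k) ((K-l) - k) /
            (k.factorial * ((K-l) - k).factorial)) := by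
    intro k hk
    have hkK : k ≤ K - l := Nat.lt_succ_iff.mp (Finset.mem_range.mp hk)
    have hlk : l + k ≤ K := by omega
    have hcl : poch c l ≠ 0 := hc l hlK
    have hclk : poch c (l+k) ≠ 0 := hc (l+k) hlk
    have hsplit : poch c (l+k) = poch c l * poch (c + l) k := poch_add c l k
    have hcpl : poch (c + l) k ≠ 0 := by
      intro h0
      exact hclk (by rw [hsplit, h0, mul_zero])
    have hchoose : ((l+k).choose l : ℝ) * l.factorial * k.factorial = (l+k).factorial := by
      have h := Nat.choose_mul_factorial_mul_factorial (Nat.le_add_right l k)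
      rw [show l + k - l = k from by omega] at h
      exact_mod_cast congrArg (Nat.cast (R := ℝ)) h
    have hpow : (-1:ℝ)^(l+k) * (-1:ℝ)^l = (-1:ℝ)^k := by
      rw [← pow_add, show l+k+l = 2*l+k from by ring, pow_add, pow_mul]
      norm_num
    have harg : poch (v + ((l+k:ℕ):ℝ)) ((K-l)-k) = poch ((v + l) + k) ((K-l)-k) := by
      congr 1
      push_cast
      ring
    unfold UB
    rw [show l + k - l = k from by omega, show K - (l+k) = (K-l)-k from by omega]
    rw [harg, poch_add γ l k, hsplit]
    field_simp
    linear_combination (poch (c-p) l * poch γ l * poch (γ + l) k * poch ((v+l)+k) ((K-l)-k)) *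
        ((((l+k).choose l : ℝ) * l.factorial * k.factorial) * hpow + ((-1:ℝ)^k) * hchoose)
  rw [Finset.sum_congr rfl hterm, ← Finset.mul_sum, vander'_div]
  rw [show v + (l:ℝ) - (γ + l) = v - γ from by ring]
  have hcl : poch c l ≠ 0 := hc l hlK
  field_simp

lemma poch_neg_nat (n : ℕ) : ∀ k : ℕ, poch (-(n:ℝ)) k = (-1:ℝ)^k * k.factorial * (n.choose k : ℝ) := by
  intro k
  induction k with
  | zero => simp [poch]
  | succ k ih =>
    rw [poch_succ, ih]
    by_cases h : k < n
    · have h1 : (n.choose (k+1) : ℕ) * (k+1) = n.choose k * (n - k) := Nat.choose_succ_right_eq n k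
      have h1R : (n.choose (k+1) : ℝ) * ((k:ℝ)+1) = (n.choose k : ℝ) * ((n:ℝ) - k) := by
        have h2 : ((n - k : ℕ) : ℝ) = (n:ℝ) - k := by
          rw [Nat.cast_sub h.le]
        calc (n.choose (k+1) : ℝ) * ((k:ℝ)+1) = ((n.choose (k+1) * (k+1) : ℕ) : ℝ) := by push_cast; ring
          _ = ((n.choose k * (n - k) : ℕ) : ℝ) := by exact_mod_cast congrArg (Nat.cast (R := ℝ)) h1
          _ = (n.choose k : ℝ) * ((n:ℝ) - k) := by push_cast [h2]; ring
      have hfac : ((k+1).factorial : ℝ) = ((k:ℝ)+1) * k.factorial := by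
        rw [Nat.factorial_succ]; push_cast; ring
      rw [hfac]
      linear_combination ((-1:ℝ)^k * (k.factorial : ℝ)) * h1R
    · have hk : n ≤ k := le_of_not_gt h
      have c1 : n.choose (k+1) = 0 := Nat.choose_eq_zero_of_lt (by omega)
      rcases eq_or_lt_of_le hk with heq | hlt
      · subst heq
        simp [c1]
      · have c0 : n.choose k = 0 := Nat.choose_eq_zero_of_lt hlt
        simp [c0, c1]

lemma poch_neg_one (m : ℕ) : poch (-1:ℝ) (m+2) = 0 := by
  rw [show m + 2 = 2 + m from by omega, poch_add]
  have h2 : poch (-1:ℝ) 2 = 0 := by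
    rw [show (2:ℕ) = 1 + 1 from rfl, poch_succ, poch_one]
    norm_num
  rw [h2, zero_mul]

theorem statement6 (n N : ℕ) (hn : 1 ≤ n) (hN : 1 ≤ N) (lam : ℝ)
    (hlam : ∀ k : ℕ, 1 ≤ k → k ≤ N → lam + (n : ℝ) / 2 - 2 * N + k ≠ 0) :
    -(N.factorial : ℝ) * poch (lam + (n : ℝ) / 2 - 2 * N + 1) N *
        ∑ j ∈ Finset.range (N + 1),
          (-1) ^ (N - j) * (n.choose (N - j) : ℝ) *
            poch ((n : ℝ) / 2) j * poch (lam + n - 2 * N) j /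
              (poch (lam + (n : ℝ) / 2 - 2 * N + 1) j * (j.factorial : ℝ)) =
      (-1) ^ (N - 1) * (∏ j ∈ Finset.range N, ((n : ℝ) / 2 - j)) * lam *
        ∏ j ∈ Finset.Icc 1 (N - 1), (lam - N - j) := by
  obtain ⟨M, rfl⟩ : ∃ M, N = M + 1 := ⟨N - 1, by omega⟩
  have hc : ∀ i, i ≤ M+1 → poch (lam + (n:ℝ)/2 - 2*((M+1:ℕ):ℝ) + 1) i ≠ 0 := by
    intro i hi
    rw [poch_eq_prod, Finset.prod_ne_zero_iff]
    intro t ht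
    have ht' : t < i := Finset.mem_range.mp ht
    have h := hlam (t+1) (by omega) (by omega)
    intro h0
    apply h
    push_cast at h0 ⊢
    linarith [h0]
  -- step 1 : rewrite the sum into convolution form
  have S1 : (∑ j ∈ Finset.range (M+1+1),
        (-1:ℝ) ^ (M+1-j) * (n.choose (M+1-j) : ℝ) *
          poch ((n:ℝ)/2) j * poch (lam + (n:ℝ) - 2*((M+1:ℕ):ℝ)) j /
            (poch (lam + (n:ℝ)/2 - 2*((M+1:ℕ):ℝ) + 1) j * (j.factorial : ℝ)))
      = ∑ j ∈ Finset.range (M+1+1),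
          poch ((n:ℝ)/2) j * poch (lam + (n:ℝ) - 2*((M+1:ℕ):ℝ)) j * poch (-(n:ℝ)) (M+1-j) /
            (poch (lam + (n:ℝ)/2 - 2*((M+1:ℕ):ℝ) + 1) j * (j.factorial : ℝ) * ((M+1-j).factorial : ℝ)) := by
    apply Finset.sum_congr rfl
    intro j hj
    have hjM : j ≤ M+1 := Nat.lt_succ_iff.mp (Finset.mem_range.mp hj)
    have hw := poch_neg_nat n (M+1-j)
    have hpc : poch (lam + (n:ℝ)/2 - 2*((M+1:ℕ):ℝ) + 1) j ≠ 0 := hc j hjM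
    rw [hw]
    have d1 : poch (lam + (n:ℝ)/2 - 2*((M+1:ℕ):ℝ) + 1) j * (j.factorial : ℝ) ≠ 0 :=
      mul_ne_zero hpc (factR_ne j)
    have d2 : poch (lam + (n:ℝ)/2 - 2*((M+1:ℕ):ℝ) + 1) j * (j.factorial : ℝ) * ((M+1-j).factorial : ℝ) ≠ 0 :=
      mul_ne_zero d1 (factR_ne _)
    rw [div_eq_div_iff d1 d2]
    ring
  rw [S1]
  rw [stepA (M+1) (-(n:ℝ)) ((n:ℝ)/2) (lam + (n:ℝ) - 2*((M+1:ℕ):ℝ))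
      (lam + (n:ℝ)/2 - 2*((M+1:ℕ):ℝ) + 1) hc]
  rw [stepB (M+1) (-(n:ℝ) + (n:ℝ)/2) ((n:ℝ)/2)
      ((lam + (n:ℝ)/2 - 2*((M+1:ℕ):ℝ) + 1) - (lam + (n:ℝ) - 2*((M+1:ℕ):ℝ)))
      (lam + (n:ℝ)/2 - 2*((M+1:ℕ):ℝ) + 1) hc]
  simp only [show (lam + (n:ℝ)/2 - 2*((M+1:ℕ):ℝ) + 1) - ((n:ℝ)/2) = lam - 2*((M+1:ℕ):ℝ) + 1 from by ring,
    show (lam + (n:ℝ)/2 - 2*((M+1:ℕ):ℝ) + 1) - (lam + (n:ℝ) - 2*((M+1:ℕ):ℝ)) = 1 - (n:ℝ)/2 from by ring,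
    show (-(n:ℝ) + (n:ℝ)/2) - (1 - (n:ℝ)/2) = (-1:ℝ) from by ring]
  have S4 : ∑ x ∈ Finset.range (M + 1 + 1),
      poch (lam - 2 * ((M+1:ℕ):ℝ) + 1) x * poch (1 - (n:ℝ) / 2) x * poch (-1:ℝ) (M + 1 - x) /
        (poch (lam + (n:ℝ) / 2 - 2 * ((M+1:ℕ):ℝ) + 1) x * (x.factorial:ℝ) * ((M + 1 - x).factorial:ℝ))
      = -(poch (lam - 2 * ((M+1:ℕ):ℝ) + 1) M * poch (1 - (n:ℝ)/2) M) /
          (poch (lam + (n:ℝ)/2 - 2*((M+1:ℕ):ℝ) + 1) M * (M.factorial:ℝ))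
        + poch (lam - 2 * ((M+1:ℕ):ℝ) + 1) (M+1) * poch (1 - (n:ℝ)/2) (M+1) /
          (poch (lam + (n:ℝ)/2 - 2*((M+1:ℕ):ℝ) + 1) (M+1) * (((M+1).factorial:ℕ):ℝ)) := by
    have hz : ∑ x ∈ Finset.range M,
        poch (lam - 2 * ((M+1:ℕ):ℝ) + 1) x * poch (1 - (n:ℝ) / 2) x * poch (-1:ℝ) (M + 1 - x) /
          (poch (lam + (n:ℝ) / 2 - 2 * ((M+1:ℕ):ℝ) + 1) x * (x.factorial:ℝ) * ((M + 1 - x).factorial:ℝ)) = 0 := by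
      apply Finset.sum_eq_zero
      intro l hl
      have hlM : l < M := Finset.mem_range.mp hl
      rw [show M+1-l = (M-1-l)+2 from by omega, poch_neg_one, mul_zero, zero_div]
    rw [Finset.sum_range_succ, Finset.sum_range_succ, hz, zero_add]
    rw [show M+1-M = 1 from by omega, show M+1-(M+1) = 0 from by omega, poch_one, poch_zero]
    norm_num [Nat.factorial]
  rw [S4]
  rw [show M+1-1 = M from by omega]
  have hprod1 : (-1:ℝ)^M * (∏ j ∈ Finset.range (M+1), ((n:ℝ)/2 - (j:ℝ)))
      = (n:ℝ)/2 * poch (1-(n:ℝ)/2) M := by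
    rw [Finset.prod_range_succ',
      Finset.prod_congr rfl (fun j hj =>
        show (n:ℝ)/2 - ((j+1:ℕ):ℝ) = (-1) * ((1 - (n:ℝ)/2) + (j:ℝ)) from by push_cast; ring),
      Finset.prod_mul_distrib, Finset.prod_const, Finset.card_range, ← poch_eq_prod]
    have hsq : (-1:ℝ)^M * (-1:ℝ)^M = 1 := by
      rw [← pow_add]; exact Even.neg_one_pow ⟨M, rfl⟩
    push_cast
    linear_combination ((n:ℝ)/2 * poch (1-(n:ℝ)/2) M) * hsq
  have hprod2 : (∏ j ∈ Finset.Icc 1 M, (lam - ((M+1:ℕ):ℝ) - (j:ℝ)))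
      = poch (lam - 2*((M+1:ℕ):ℝ) + 1) M := by
    rw [← Finset.Ico_add_one_right_eq_Icc, Finset.prod_Ico_eq_prod_range]
    rw [show M+1-1 = M from by omega]
    calc ∏ j ∈ Finset.range M, (lam - ((M+1:ℕ):ℝ) - ((1+j:ℕ):ℝ))
        = ∏ j ∈ Finset.range M, ((lam - 2*((M+1:ℕ):ℝ) + 1) + ((M-1-j:ℕ):ℝ)) := by
          apply Finset.prod_congr rfl
          intro j hj
          have hjM : j < M := Finset.mem_range.mp hj
          have h1 : ((M-1-j:ℕ):ℝ) = (M:ℝ) - 1 - j := by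
            rw [Nat.sub_sub, Nat.cast_sub (by omega)]
            push_cast
            ring
          rw [h1]
          push_cast
          ring
      _ = ∏ j ∈ Finset.range M, ((lam - 2*((M+1:ℕ):ℝ) + 1) + (j:ℝ)) :=
          Finset.prod_range_reflect (fun t => (lam - 2*((M+1:ℕ):ℝ) + 1) + (t:ℝ)) M
      _ = poch (lam - 2*((M+1:ℕ):ℝ) + 1) M := (poch_eq_prod _ M).symm
  rw [hprod1, hprod2]
  have eA := poch_succ (lam - 2*((M+1:ℕ):ℝ) + 1) M
  have eB := poch_succ (1 - (n:ℝ)/2) M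
  have eC := poch_succ (lam + (n:ℝ)/2 - 2*((M+1:ℕ):ℝ) + 1) M
  have efact : (((M+1).factorial:ℕ) : ℝ) = ((M:ℝ)+1) * (M.factorial:ℝ) := by
    rw [Nat.factorial_succ]; push_cast; ring
  have hpcM : poch (lam + (n:ℝ)/2 - 2*((M+1:ℕ):ℝ) + 1) M ≠ 0 := hc M (by omega)
  have hlast : (lam + (n:ℝ)/2 - 2*((M+1:ℕ):ℝ) + 1) + (M:ℝ) ≠ 0 := by
    intro h0
    apply hlam (M+1) (by omega) (by omega)
    push_cast
    push_cast at h0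
    linarith
  have hfM : ((M.factorial:ℕ):ℝ) ≠ 0 := factR_ne M
  rw [eA, eB, eC, efact]
  have hM1 : ((M:ℝ)+1) ≠ 0 := by positivity
  have d1 : poch (lam + (n:ℝ)/2 - 2*((M+1:ℕ):ℝ) + 1) M * ((M.factorial:ℕ):ℝ) ≠ 0 :=
    mul_ne_zero hpcM hfM
  have d2 : (poch (lam + (n:ℝ)/2 - 2*((M+1:ℕ):ℝ) + 1) M * (lam + (n:ℝ)/2 - 2*((M+1:ℕ):ℝ) + 1 + (M:ℝ))) *
      (((M:ℝ)+1) * ((M.factorial:ℕ):ℝ)) ≠ 0 :=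
    mul_ne_zero (mul_ne_zero hpcM hlast) (mul_ne_zero hM1 hfM)
  rw [div_add_div _ _ d1 d2, ← mul_div_assoc, div_eq_iff (mul_ne_zero d1 d2)]
  push_cast
  ring
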